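/- arXiv:2605.26900 — 3 statements merged into one kernel-verified Lean document; each statement's English description precedes it below -/
import Mathlib

section
/- Let d ≥ 1, κ > 0, and let R, S be nonnegative real-valued random variables with E[R²] = E[S²] = 1, and let U, V be random vectors in ℝ^d each distributed according to the uniform probability measure σ_{d-1} on the unit sphere, such that R, S, U, V are mutually independent. Then E[exp(κ R S ⟨U, V⟩)] ≥ E[exp(κ ⟨U, V⟩)], where the left-hand expectation is taken in [0, ∞]. -/
open MeasureTheory ProbabilityTheory
open scoped RealInnerProductSpace
open scoped ENNReal
open Real


/-- `sinh (a*s) ≤ s * sinh a` for `0 ≤ a`, `0 ≤ s ≤ 1`. -/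
lemma sinh_mul_le_aux (s : ℝ) (hs0 : 0 ≤ s) (hs1 : s ≤ 1) :
    ∀ a : ℝ, 0 ≤ a → sinh (a * s) ≤ s * sinh a := by
  have hmono : MonotoneOn (fun a : ℝ => s * sinh a - sinh (a * s)) (Set.Ici 0) := by
    apply monotoneOn_of_deriv_nonneg (convex_Ici 0)
    · fun_prop
    · intro x hx
      exact (((hasDerivAt_sinh x).const_mul s).sub
        ((hasDerivAt_sinh (x*s)).comp x ((hasDerivAt_id x).mul_const s))).differentiableAt.differentiableWithinAt
    · intro x hx
      have hd : HasDerivAt (fun a : ℝ => s * sinh a - sinh (a * s))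
          (s * cosh x - cosh (x*s) * (1 * s)) x := by
        have h := ((hasDerivAt_sinh x).const_mul s).sub
          ((hasDerivAt_sinh (x*s)).comp x ((hasDerivAt_id x).mul_const s))
        exact h
      rw [hd.deriv]
      have hx0 : 0 ≤ x := le_of_lt (by simpa using hx)
      have : cosh (x * s) ≤ cosh x := by
        rw [cosh_le_cosh, abs_of_nonneg (mul_nonneg hx0 hs0), abs_of_nonneg hx0]
        nlinarith
      nlinarith
  intro a ha
  have := hmono (Set.self_mem_Ici) (Set.mem_Ici.2 ha) ha
  simp only [mul_zero, zero_mul, sinh_zero, sub_zero, mul_zero, sub_nonneg] at this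
  linarith [this]

/-- `s * sinh a ≤ sinh (a*s)` for `0 ≤ a`, `1 ≤ s`. -/
lemma le_sinh_mul_aux (s : ℝ) (hs1 : 1 ≤ s) :
    ∀ a : ℝ, 0 ≤ a → s * sinh a ≤ sinh (a * s) := by
  have hs0 : 0 ≤ s := le_trans zero_le_one hs1
  have hmono : MonotoneOn (fun a : ℝ => sinh (a * s) - s * sinh a) (Set.Ici 0) := by
    apply monotoneOn_of_deriv_nonneg (convex_Ici 0)
    · fun_prop
    · intro x hx
      exact (((hasDerivAt_sinh (x*s)).comp x ((hasDerivAt_id x).mul_const s)).sub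
        ((hasDerivAt_sinh x).const_mul s)).differentiableAt.differentiableWithinAt
    · intro x hx
      have hd : HasDerivAt (fun a : ℝ => sinh (a * s) - s * sinh a)
          (cosh (x*s) * (1 * s) - s * cosh x) x := by
        have h := (((hasDerivAt_sinh (x*s)).comp x ((hasDerivAt_id x).mul_const s)).sub
          ((hasDerivAt_sinh x).const_mul s))
        exact h
      rw [hd.deriv]
      have hx0 : 0 ≤ x := le_of_lt (by simpa using hx)
      have : cosh x ≤ cosh (x * s) := by
        rw [cosh_le_cosh, abs_of_nonneg (mul_nonneg hx0 hs0), abs_of_nonneg hx0]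
        nlinarith
      nlinarith
  intro a ha
  have := hmono (Set.self_mem_Ici) (Set.mem_Ici.2 ha) ha
  simp only [zero_mul, sinh_zero, mul_zero, sub_zero, sub_nonneg] at this
  linarith [this]

/-- supporting-line inequality: `cosh a + (a sinh a / 2)(s² − 1) ≤ cosh (a s)` for `a, s ≥ 0`. -/
lemma cosh_support_line (a : ℝ) (ha : 0 ≤ a) :
    ∀ s : ℝ, 0 ≤ s → cosh a + (a * sinh a / 2) * (s ^ 2 - 1) ≤ cosh (a * s) := by
  -- φ s = cosh (a s) - (a sinh a / 2) s², antitone on [0,1], monotone on [1,∞)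
  set m := a * sinh a / 2 with hm
  have hφd : ∀ s : ℝ, HasDerivAt (fun s : ℝ => cosh (a * s) - m * s ^ 2)
      (sinh (a * s) * a - m * (2 * s)) s := by
    intro s
    have h1 : HasDerivAt (fun s : ℝ => cosh (a * s)) (sinh (a * s) * a) s :=
      (hasDerivAt_cosh (a*s)).comp s ((hasDerivAt_id s).const_mul a) |>.congr_deriv (by ring)
    have h2 : HasDerivAt (fun s : ℝ => m * s ^ 2) (m * (2 * s)) s := by
      simpa using ((hasDerivAt_pow 2 s).const_mul m).congr_deriv (by ring)
    exact h1.sub h2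
  have key : ∀ s : ℝ, 0 ≤ s → cosh a - m * 1 ≤ cosh (a * s) - m * s ^ 2 := by
    intro s hs0
    rcases le_total s 1 with hs1 | hs1
    · -- antitone on [0,1]
      have hanti : AntitoneOn (fun s : ℝ => cosh (a * s) - m * s ^ 2) (Set.Icc 0 1) := by
        apply antitoneOn_of_deriv_nonpos (convex_Icc 0 1)
        · fun_prop
        · intro x hx; exact (hφd x).differentiableAt.differentiableWithinAt
        · intro x hx
          rw [(hφd x).deriv]
          rw [interior_Icc] at hx
          have h := sinh_mul_le_aux x hx.1.le hx.2.le a ha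
          have hsa : 0 ≤ sinh a := sinh_nonneg_iff.2 ha
          nlinarith [hx.1.le, hm]
      have := hanti (Set.mem_Icc.2 ⟨hs0, hs1⟩) (Set.mem_Icc.2 ⟨zero_le_one, le_refl 1⟩) hs1
      simpa [mul_one] using this
    · -- monotone on [1,∞)
      have hmono : MonotoneOn (fun s : ℝ => cosh (a * s) - m * s ^ 2) (Set.Ici 1) := by
        apply monotoneOn_of_deriv_nonneg (convex_Ici 1)
        · fun_prop
        · intro x hx; exact (hφd x).differentiableAt.differentiableWithinAt
        · intro x hx
          rw [(hφd x).deriv]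
          have hx1 : 1 ≤ x := le_of_lt (by simpa using hx)
          have h := le_sinh_mul_aux x hx1 a ha
          have hsa : 0 ≤ sinh a := sinh_nonneg_iff.2 ha
          nlinarith [hm]
      have := hmono (Set.mem_Ici.2 (le_refl 1)) (Set.mem_Ici.2 hs1) hs1
      simpa [mul_one] using this
  intro s hs0
  have := key s hs0
  nlinarith [this]

open MeasureTheory in
/-- Jensen-type step: if `T ≥ 0`, `E T = 1`, then `cosh b ≤ E[cosh (b √T)]` in `[0,∞]`. -/
lemma key_lintegral {α : Type*} [MeasurableSpace α] (μ : Measure α) [IsProbabilityMeasure μ]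
    (T : α → ℝ) (hT0 : ∀ x, 0 ≤ T x) (hTi : Integrable T μ) (hT1 : ∫ x, T x ∂μ = 1)
    (b : ℝ) (hb : 0 ≤ b) :
    ENNReal.ofReal (cosh b) ≤ ∫⁻ x, ENNReal.ofReal (cosh (b * Real.sqrt (T x))) ∂μ := by
  set m := b * sinh b / 2 with hm
  set l : α → ℝ := fun x => cosh b + m * (T x - 1) with hl
  have h2 : Integrable (fun x => m * (T x - 1)) μ := by
    have := (hTi.sub (integrable_const 1)).const_mul m
    simpa using this
  have hli : Integrable l μ := (integrable_const _).add h2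
  have hlint : ∫ x, l x ∂μ = cosh b := by
    rw [hl, integral_add (integrable_const _) h2, MeasureTheory.integral_const_mul]
    have h3 : ∫ x, (T x - 1) ∂μ = 0 := by
      rw [integral_sub hTi (integrable_const 1), hT1]; simp
    rw [h3]
    simp
  have hmax : ∀ a : ℝ, ENNReal.ofReal (max a 0) = ENNReal.ofReal a := by
    intro a
    rcases le_total a 0 with h | h
    · simp [max_eq_right h, ENNReal.ofReal_eq_zero.2 h]
    · simp [max_eq_left h]
  calc ENNReal.ofReal (cosh b) = ENNReal.ofReal (∫ x, l x ∂μ) := by rw [hlint]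
    _ ≤ ENNReal.ofReal (∫ x, max (l x) 0 ∂μ) := by
        apply ENNReal.ofReal_le_ofReal
        exact integral_mono hli hli.pos_part (fun x => le_max_left _ _)
    _ = ∫⁻ x, ENNReal.ofReal (max (l x) 0) ∂μ := by
        apply ofReal_integral_eq_lintegral_ofReal hli.pos_part
        exact Filter.Eventually.of_forall (fun x => le_max_right _ _)
    _ = ∫⁻ x, ENNReal.ofReal (l x) ∂μ := by simp_rw [hmax]
    _ ≤ ∫⁻ x, ENNReal.ofReal (cosh (b * Real.sqrt (T x))) ∂μ := by
        apply lintegral_mono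
        intro x
        apply ENNReal.ofReal_le_ofReal
        have := cosh_support_line b hb (Real.sqrt (T x)) (Real.sqrt_nonneg _)
        rwa [Real.sq_sqrt (hT0 x)] at this

open MeasureTheory in
lemma lintegral_exp_eq_lintegral_cosh {α : Type*} [MeasurableSpace α] (μ : Measure α)
    (X : α → ℝ) (hX : Measurable X)
    (hsym : ∫⁻ x, ENNReal.ofReal (Real.exp (X x)) ∂μ
          = ∫⁻ x, ENNReal.ofReal (Real.exp (-X x)) ∂μ) :
    ∫⁻ x, ENNReal.ofReal (Real.exp (X x)) ∂μ = ∫⁻ x, ENNReal.ofReal (cosh (X x)) ∂μ := by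
  have hptw : ∀ y : ℝ, 2 * ENNReal.ofReal (cosh y)
      = ENNReal.ofReal (Real.exp y) + ENNReal.ofReal (Real.exp (-y)) := by
    intro y
    rw [← ENNReal.ofReal_add (Real.exp_pos y).le (Real.exp_pos (-y)).le]
    rw [show (2 : ENNReal) = ENNReal.ofReal 2 by simp]
    rw [← ENNReal.ofReal_mul (by norm_num : (0:ℝ) ≤ 2), Real.cosh_eq]
    ring_nf
  have hmc : Measurable fun x => ENNReal.ofReal (cosh (X x)) :=
    ENNReal.measurable_ofReal.comp (Real.continuous_cosh.measurable.comp hX)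
  have hme : Measurable fun x => ENNReal.ofReal (Real.exp (X x)) :=
    ENNReal.measurable_ofReal.comp (Real.continuous_exp.measurable.comp hX)
  have h2 : 2 * ∫⁻ x, ENNReal.ofReal (cosh (X x)) ∂μ
      = 2 * ∫⁻ x, ENNReal.ofReal (Real.exp (X x)) ∂μ := by
    rw [← lintegral_const_mul 2 hmc]
    simp_rw [hptw]
    rw [lintegral_add_left hme, ← hsym, two_mul]
  exact (((ENNReal.mul_right_inj (by norm_num) (by norm_num)).1 h2)).symm

@[fun_prop] lemma measurable_cosh'' : Measurable Real.cosh := Real.continuous_cosh.measurable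
@[fun_prop] lemma measurable_rexp'' : Measurable Real.exp := Real.continuous_exp.measurable
@[fun_prop] lemma measurable_inner_pair {d : ℕ} :
    Measurable fun p : (EuclideanSpace ℝ (Fin d)) × (EuclideanSpace ℝ (Fin d)) => ⟪p.1, p.2⟫ :=
  continuous_inner.measurable


/-- let `R, S ≥ 0` with `E[R²] = E[S²] = 1`, and `U, V` uniform on the
unit sphere `S^{d-1} ⊆ ℝ^d`, with `R, S, U, V` mutually independent (their joint law is
the product of the marginals).  Then `E[exp(κ R S ⟨U,V⟩)] ≥ E[exp(κ ⟨U,V⟩)]`, the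
left-hand expectation being taken in `[0, ∞]`. -/
theorem stmt7 {Ω : Type*} [MeasureSpace Ω]
    [IsProbabilityMeasure (volume : Measure Ω)]
    (d : ℕ) (hd : 1 ≤ d) (κ : ℝ) (hκ : 0 < κ)
    (σ : Measure (EuclideanSpace ℝ (Fin d))) [IsProbabilityMeasure σ]
    (hσsupp : σ {x : EuclideanSpace ℝ (Fin d) | ‖x‖ = 1} = 1)
    (hσrot : ∀ Q : EuclideanSpace ℝ (Fin d) ≃ₗᵢ[ℝ] EuclideanSpace ℝ (Fin d),
      σ.map Q = σ)
    (R S : Ω → ℝ) (hRm : Measurable R) (hSm : Measurable S)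
    (hR0 : ∀ ω, 0 ≤ R ω) (hS0 : ∀ ω, 0 ≤ S ω)
    (hR2 : ∫ ω, R ω ^ 2 = 1) (hS2 : ∫ ω, S ω ^ 2 = 1)
    (U V : Ω → EuclideanSpace ℝ (Fin d)) (hU : Measurable U) (hV : Measurable V)
    (hUlaw : Measure.map U volume = σ) (hVlaw : Measure.map V volume = σ)
    (hindep : Measure.map (fun ω => (R ω, S ω, U ω, V ω)) volume =
      (Measure.map R volume).prod ((Measure.map S volume).prod
        ((Measure.map U volume).prod (Measure.map V volume)))) :
    ∫⁻ ω, ENNReal.ofReal (Real.exp (κ * ⟪U ω, V ω⟫)) ≤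
      ∫⁻ ω, ENNReal.ofReal (Real.exp (κ * R ω * S ω * ⟪U ω, V ω⟫)) := by
  set μR := Measure.map R volume with hμR
  set μS := Measure.map S volume with hμS
  haveI hPR : IsProbabilityMeasure μR := Measure.isProbabilityMeasure_map hRm.aemeasurable
  haveI hPS : IsProbabilityMeasure μS := Measure.isProbabilityMeasure_map hSm.aemeasurable
  set ν := μR.prod (μS.prod (σ.prod σ)) with hνdef
  have hν : Measure.map (fun ω => (R ω, S ω, U ω, V ω)) volume = ν := by
    rw [hindep, hUlaw, hVlaw]
  have hTup : Measurable fun ω => (R ω, S ω, U ω, V ω) :=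
    hRm.prodMk (hSm.prodMk (hU.prodMk hV))
  set X : ℝ × ℝ × EuclideanSpace ℝ (Fin d) × EuclideanSpace ℝ (Fin d) → ℝ := fun p => κ * p.1 * p.2.1 * ⟪p.2.2.1, p.2.2.2⟫ with hXdef
  set Y : ℝ × ℝ × EuclideanSpace ℝ (Fin d) × EuclideanSpace ℝ (Fin d) → ℝ := fun p => κ * ⟪p.2.2.1, p.2.2.2⟫ with hYdef
  have hXm : Measurable X := by rw [hXdef]; fun_prop
  have hYm : Measurable Y := by rw [hYdef]; fun_prop
  -- transfer to the product space
  have htrans : ∀ (f : ℝ × ℝ × EuclideanSpace ℝ (Fin d) × EuclideanSpace ℝ (Fin d) → ℝ), Measurable f →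
      (∫⁻ ω, ENNReal.ofReal (Real.exp (f (R ω, S ω, U ω, V ω)))) =
      ∫⁻ p, ENNReal.ofReal (Real.exp (f p)) ∂ν := by
    intro f hf
    rw [← hν, lintegral_map (by fun_prop) hTup]
  have hgoalL : (∫⁻ ω, ENNReal.ofReal (Real.exp (κ * ⟪U ω, V ω⟫))) =
      ∫⁻ p, ENNReal.ofReal (Real.exp (Y p)) ∂ν := htrans Y hYm
  have hgoalR : (∫⁻ ω, ENNReal.ofReal (Real.exp (κ * R ω * S ω * ⟪U ω, V ω⟫))) =
      ∫⁻ p, ENNReal.ofReal (Real.exp (X p)) ∂ν := htrans X hXm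
  rw [hgoalL, hgoalR]
  -- symmetry: the map negating the last coordinate preserves ν
  have hσneg : Measure.map (fun v : EuclideanSpace ℝ (Fin d) => -v) σ = σ := by
    have := hσrot (LinearIsometryEquiv.neg ℝ)
    rwa [LinearIsometryEquiv.coe_neg] at this
  set Φ : ℝ × ℝ × EuclideanSpace ℝ (Fin d) × EuclideanSpace ℝ (Fin d) → ℝ × ℝ × EuclideanSpace ℝ (Fin d) × EuclideanSpace ℝ (Fin d) :=
    Prod.map id (Prod.map id (Prod.map id (fun v : EuclideanSpace ℝ (Fin d) => -v))) with hΦdef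
  have hΦm : Measurable Φ :=
    measurable_id.prodMap (measurable_id.prodMap (measurable_id.prodMap measurable_neg))
  have hΦν : Measure.map Φ ν = ν := by
    have e3 : Measure.map (Prod.map (id : EuclideanSpace ℝ (Fin d) → EuclideanSpace ℝ (Fin d)) fun v : EuclideanSpace ℝ (Fin d) => -v) (σ.prod σ) = σ.prod σ := by
      rw [← Measure.map_prod_map σ σ measurable_id measurable_neg, Measure.map_id, hσneg]
    have e2 : Measure.map (Prod.map (id : ℝ → ℝ) (Prod.map (id : EuclideanSpace ℝ (Fin d) → EuclideanSpace ℝ (Fin d)) fun v : EuclideanSpace ℝ (Fin d) => -v))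
        (μS.prod (σ.prod σ)) = μS.prod (σ.prod σ) := by
      rw [← Measure.map_prod_map μS (σ.prod σ) measurable_id
        (measurable_id.prodMap measurable_neg), Measure.map_id, e3]
    rw [hνdef, hΦdef,
      ← Measure.map_prod_map μR (μS.prod (σ.prod σ)) measurable_id
        (measurable_id.prodMap (measurable_id.prodMap measurable_neg)),
      Measure.map_id, e2]
  have hsymgen : ∀ (f : ℝ × ℝ × EuclideanSpace ℝ (Fin d) × EuclideanSpace ℝ (Fin d) → ℝ), Measurable f → (∀ p, f (Φ p) = - f p) →
      ∫⁻ p, ENNReal.ofReal (Real.exp (f p)) ∂ν = ∫⁻ p, ENNReal.ofReal (Real.exp (-f p)) ∂ν := by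
    intro f hf hneg
    conv_lhs => rw [← hΦν]
    rw [lintegral_map (by fun_prop) hΦm]
    simp_rw [hneg]
  have hXneg : ∀ p, X (Φ p) = - X p := by
    intro p
    obtain ⟨r, s, u, v⟩ := p
    simp only [hXdef, hΦdef, Prod.map, id_eq, inner_neg_right]
    ring
  have hYneg : ∀ p, Y (Φ p) = - Y p := by
    intro p
    obtain ⟨r, s, u, v⟩ := p
    simp only [hYdef, hΦdef, Prod.map, id_eq, inner_neg_right]
    ring
  rw [lintegral_exp_eq_lintegral_cosh ν X hXm (hsymgen X hXm hXneg),
      lintegral_exp_eq_lintegral_cosh ν Y hYm (hsymgen Y hYm hYneg)]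
  -- expand LHS: it is a constant
  have hLHS : ∫⁻ p, ENNReal.ofReal (cosh (Y p)) ∂ν
      = ∫⁻ q : EuclideanSpace ℝ (Fin d) × EuclideanSpace ℝ (Fin d),
          ENNReal.ofReal (cosh (κ * ⟪q.1, q.2⟫)) ∂(σ.prod σ) := by
    rw [hνdef, lintegral_prod _ (by rw [hYdef]; fun_prop)]
    have h1 : ∀ r : ℝ, (∫⁻ w, ENNReal.ofReal (cosh (Y (r, w))) ∂(μS.prod (σ.prod σ)))
        = ∫⁻ q, ENNReal.ofReal (cosh (κ * ⟪q.1, q.2⟫)) ∂(σ.prod σ) := by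
      intro r
      rw [lintegral_prod _ (by rw [hYdef]; fun_prop)]
      have h2 : ∀ s : ℝ, (∫⁻ q, ENNReal.ofReal (cosh (Y (r, s, q))) ∂(σ.prod σ))
          = ∫⁻ q, ENNReal.ofReal (cosh (κ * ⟪q.1, q.2⟫)) ∂(σ.prod σ) := fun s => rfl
      simp_rw [h2]
      rw [lintegral_const, measure_univ, mul_one]
    simp_rw [h1]
    rw [lintegral_const, measure_univ, mul_one]
  -- expand RHS via Fubini
  have hRHS : ∫⁻ p, ENNReal.ofReal (cosh (X p)) ∂ν
      = ∫⁻ q : EuclideanSpace ℝ (Fin d) × EuclideanSpace ℝ (Fin d),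
          ∫⁻ z : ℝ × ℝ, ENNReal.ofReal (cosh (κ * z.1 * z.2 * ⟪q.1, q.2⟫)) ∂(μR.prod μS)
          ∂(σ.prod σ) := by
    rw [hνdef, lintegral_prod _ (by rw [hXdef]; fun_prop)]
    have h1 : ∀ r : ℝ, (∫⁻ w, ENNReal.ofReal (cosh (X (r, w))) ∂(μS.prod (σ.prod σ)))
        = ∫⁻ q, ∫⁻ s, ENNReal.ofReal (cosh (κ * r * s * ⟪q.1, q.2⟫)) ∂μS ∂(σ.prod σ) := by
      intro r
      rw [lintegral_prod _ (by rw [hXdef]; fun_prop)]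
      exact lintegral_lintegral_swap
        (f := fun s (q : EuclideanSpace ℝ (Fin d) × EuclideanSpace ℝ (Fin d)) =>
          ENNReal.ofReal (cosh (κ * r * s * ⟪q.1, q.2⟫))) (by fun_prop)
    simp_rw [h1]
    rw [lintegral_lintegral_swap
      (f := fun r (q : EuclideanSpace ℝ (Fin d) × EuclideanSpace ℝ (Fin d)) =>
        ∫⁻ s, ENNReal.ofReal (cosh (κ * r * s * ⟪q.1, q.2⟫)) ∂μS)
      ((Measurable.lintegral_prod_right'
        (f := fun x : (ℝ × (EuclideanSpace ℝ (Fin d) × EuclideanSpace ℝ (Fin d))) × ℝ =>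
          ENNReal.ofReal (cosh (κ * x.1.1 * x.2 * ⟪x.1.2.1, x.1.2.2⟫))) (by fun_prop)).aemeasurable)]
    refine lintegral_congr fun q => ?_
    rw [lintegral_prod _ (by fun_prop)]
  -- integrability facts
  have hRint : Integrable (fun ω => R ω ^ 2) (volume : Measure Ω) := by
    by_contra h
    rw [integral_undef h] at hR2
    exact one_ne_zero hR2.symm
  have hSint : Integrable (fun ω => S ω ^ 2) (volume : Measure Ω) := by
    by_contra h
    rw [integral_undef h] at hS2
    exact one_ne_zero hS2.symm
  have haesm : AEStronglyMeasurable (fun r : ℝ => r ^ 2) μR :=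
    (continuous_pow 2).aestronglyMeasurable
  have haesm' : AEStronglyMeasurable (fun r : ℝ => r ^ 2) μS :=
    (continuous_pow 2).aestronglyMeasurable
  have hRint' : Integrable (fun r : ℝ => r ^ 2) μR := by
    rw [hμR, integrable_map_measure (by rw [← hμR]; exact haesm) hRm.aemeasurable]
    exact hRint
  have hSint' : Integrable (fun r : ℝ => r ^ 2) μS := by
    rw [hμS, integrable_map_measure (by rw [← hμS]; exact haesm') hSm.aemeasurable]
    exact hSint
  have hRmean : ∫ r : ℝ, r ^ 2 ∂μR = 1 := by
    rw [hμR, integral_map hRm.aemeasurable (by rw [← hμR]; exact haesm)]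
    exact hR2
  have hSmean : ∫ r : ℝ, r ^ 2 ∂μS = 1 := by
    rw [hμS, integral_map hSm.aemeasurable (by rw [← hμS]; exact haesm')]
    exact hS2
  have heq : (fun z : ℝ × ℝ => (z.1 * z.2) ^ 2) = fun z : ℝ × ℝ => z.1 ^ 2 * z.2 ^ 2 := by
    funext z; ring
  have hTi : Integrable (fun z : ℝ × ℝ => (z.1 * z.2) ^ 2) (μR.prod μS) := by
    rw [heq]; exact hRint'.mul_prod hSint'
  have hT1 : ∫ z : ℝ × ℝ, (z.1 * z.2) ^ 2 ∂(μR.prod μS) = 1 := by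
    rw [heq]
    have h := integral_prod_mul (μ := μR) (ν := μS) (fun x : ℝ => x ^ 2) (fun x : ℝ => x ^ 2)
    simp only [] at h
    rw [h, hRmean, hSmean]; norm_num
  -- pointwise Jensen bound
  have hpt : ∀ q : EuclideanSpace ℝ (Fin d) × EuclideanSpace ℝ (Fin d),
      ENNReal.ofReal (cosh (κ * ⟪q.1, q.2⟫)) ≤
      ∫⁻ z : ℝ × ℝ, ENNReal.ofReal (cosh (κ * z.1 * z.2 * ⟪q.1, q.2⟫)) ∂(μR.prod μS) := by
    intro q
    have key := key_lintegral (μR.prod μS) (fun z : ℝ × ℝ => (z.1 * z.2) ^ 2)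
      (fun z => sq_nonneg _) hTi hT1 (|κ * ⟪q.1, q.2⟫|) (abs_nonneg _)
    have h2 : ∀ z : ℝ × ℝ, cosh (|κ * ⟪q.1, q.2⟫| * Real.sqrt ((z.1 * z.2) ^ 2))
        = cosh (κ * z.1 * z.2 * ⟪q.1, q.2⟫) := by
      intro z
      rw [Real.sqrt_sq_eq_abs, ← abs_mul, Real.cosh_abs]
      congr 1
      ring
    simp_rw [h2] at key
    rwa [Real.cosh_abs] at key
  rw [hLHS, hRHS]
  exact lintegral_mono hpt
end

section
/- Let d ≥ 1 and let μ, ν be Borel probability measures on ℝ^d such that for every a ∈ ℝ^d the pushforward of μ under the map x ↦ ⟨a, x⟩ equals the pushforward of ν under the same map. Then μ = ν. -/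
open MeasureTheory Complex Set Submodule
open Filter
open scoped RealInnerProductSpace BoundedContinuousFunction NNReal ENNReal Real

set_option synthInstance.maxHeartbeats 1000000
set_option maxHeartbeats 1000000

namespace CramerWold

variable {d : ℕ} {L : ℝ}

/-- coordinatewise quotient map to the torus -/
noncomputable def Q (d : ℕ) (L : ℝ) : C(EuclideanSpace ℝ (Fin d), Fin d → AddCircle L) :=
  ⟨fun x i => (x i : AddCircle L), continuous_pi fun i =>
    (AddCircle.continuous_mk' L).comp ((continuous_apply i).comp (PiLp.continuous_ofLp (p := 2) (β := fun _ : Fin d => ℝ)))⟩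

/-- characters of the torus -/
noncomputable def ch (L : ℝ) (k : Fin d → ℤ) : C(Fin d → AddCircle L, ℂ) :=
  ∏ i, (fourier (k i)).comp ⟨fun t => t i, continuous_apply i⟩

lemma ch_apply (k : Fin d → ℤ) (t : Fin d → AddCircle L) :
    ch L k t = ∏ i, fourier (k i) (t i) := by
  simp [ch]

lemma ch_mul (k j : Fin d → ℤ) : ch L k * ch L j = ch L (k + j) := by
  ext t
  simp only [ContinuousMap.mul_apply, ch_apply, Pi.add_apply, fourier_add,
    Finset.prod_mul_distrib]

lemma ch_zero : ch L (0 : Fin d → ℤ) = 1 := by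
  ext t
  simp [ch_apply, fourier_zero]

lemma ch_star (k : Fin d → ℤ) : star (ch L k) = ch L (-k) := by
  ext t
  simp only [ContinuousMap.star_apply, ch_apply, Pi.neg_apply]
  rw [show (star (∏ i, fourier (k i) (t i)) : ℂ)
      = (starRingEnd ℂ) (∏ i, fourier (k i) (t i)) from rfl, map_prod]
  exact Finset.prod_congr rfl fun i _ => (fourier_neg).symm

/-- the star subalgebra generated by the characters -/
noncomputable def chAlg (d : ℕ) (L : ℝ) : StarSubalgebra ℂ C(Fin d → AddCircle L, ℂ) where
  toSubalgebra := Algebra.adjoin ℂ (Set.range (ch L (d := d)))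
  star_mem' := by
    show Algebra.adjoin ℂ (Set.range (ch L (d := d))) ≤
      star (Algebra.adjoin ℂ (Set.range (ch L (d := d))))
    refine Algebra.adjoin_le ?_
    rintro - ⟨k, rfl⟩
    exact Algebra.subset_adjoin ⟨-k, (ch_star k).symm ▸ rfl⟩

lemma chAlg_coe (d : ℕ) (L : ℝ) :
    Subalgebra.toSubmodule (chAlg d L).toSubalgebra = span ℂ (Set.range (ch L (d := d))) := by
  show Subalgebra.toSubmodule (Algebra.adjoin ℂ (Set.range (ch L (d := d))))
      = span ℂ (Set.range (ch L (d := d)))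
  apply Algebra.adjoin_eq_span_of_subset
  refine Subset.trans ?_ Submodule.subset_span
  intro x hx
  refine Submonoid.closure_induction (fun _ => id) ⟨0, ch_zero⟩ ?_ hx
  rintro - - - - ⟨m, rfl⟩ ⟨n, rfl⟩
  exact ⟨m + n, (ch_mul m n).symm⟩

lemma ch_single_apply (i : Fin d) (u : Fin d → AddCircle L) :
    ch L (Pi.single i 1) u = fourier 1 (u i) := by
  rw [ch_apply]
  rw [Finset.prod_eq_single i]
  · rw [Pi.single_eq_same]
  · intro j _ hj
    rw [Pi.single_eq_of_ne hj, fourier_zero]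
  · intro hmem; exact absurd (Finset.mem_univ i) hmem

lemma chAlg_separatesPoints [hL : Fact (0 < L)] : (chAlg d L).SeparatesPoints := by
  intro s t hst
  obtain ⟨i, hi⟩ : ∃ i, s i ≠ t i := by
    by_contra hc
    push_neg at hc
    exact hst (funext hc)
  refine ⟨_, ⟨ch L (Pi.single i 1), Algebra.subset_adjoin ⟨Pi.single i 1, rfl⟩, rfl⟩, ?_⟩
  dsimp only
  rw [ch_single_apply, ch_single_apply, fourier_one, fourier_one]
  intro hh
  rw [Circle.coe_inj] at hh
  exact hi (AddCircle.injective_toCircle hL.out.ne' hh)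

lemma span_ch_dense [Fact (0 < L)] :
    (span ℂ (Set.range (ch L (d := d)))).topologicalClosure = ⊤ := by
  rw [← chAlg_coe]
  exact congr_arg (Subalgebra.toSubmodule <| StarSubalgebra.toSubalgebra ·)
    (ContinuousMap.starSubalgebra_topologicalClosure_eq_top_of_separatesPoints (chAlg d L)
      chAlg_separatesPoints)

lemma integrable_CM [Fact (0 < L)] (μ : Measure (Fin d → AddCircle L))
    [IsFiniteMeasure μ] (g : C(Fin d → AddCircle L, ℂ)) :
    Integrable (fun t => g t) μ :=
  g.continuous.integrable_of_hasCompactSupport (HasCompactSupport.of_compactSpace _)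

lemma continuous_integral_CM [Fact (0 < L)] (μ : Measure (Fin d → AddCircle L))
    [IsProbabilityMeasure μ] :
    Continuous fun g : C(Fin d → AddCircle L, ℂ) => ∫ t, g t ∂μ := by
  have key : LipschitzWith 1 fun g : C(Fin d → AddCircle L, ℂ) => ∫ t, g t ∂μ := by
    refine LipschitzWith.of_dist_le_mul fun g g' => ?_
    rw [dist_eq_norm, ← integral_sub (integrable_CM μ g) (integrable_CM μ g')]
    calc ‖∫ t, g t - g' t ∂μ‖ ≤ dist g g' * (μ Set.univ).toReal := by
          refine norm_integral_le_of_norm_le_const (Eventually.of_forall fun t => ?_)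
          rw [← dist_eq_norm]
          exact ContinuousMap.dist_apply_le_dist t
      _ = 1 * dist g g' := by simp [measure_univ, mul_comm]
  exact key.continuous

lemma integral_CM_eq_of_char [Fact (0 < L)]
    (μ ν : Measure (Fin d → AddCircle L)) [IsProbabilityMeasure μ] [IsProbabilityMeasure ν]
    (hch : ∀ k : Fin d → ℤ, ∫ t, ch L k t ∂μ = ∫ t, ch L k t ∂ν)
    (g : C(Fin d → AddCircle L, ℂ)) : ∫ t, g t ∂μ = ∫ t, g t ∂ν := by
  let D : Submodule ℂ C(Fin d → AddCircle L, ℂ) :=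
    { carrier := {g | ∫ t, g t ∂μ = ∫ t, g t ∂ν}
      add_mem' := by
        intro g g' hg hg'
        simp only [Set.mem_setOf_eq, ContinuousMap.add_apply] at *
        rw [integral_add (integrable_CM μ g) (integrable_CM μ g'),
          integral_add (integrable_CM ν g) (integrable_CM ν g'), hg, hg']
      zero_mem' := by simp
      smul_mem' := by
        intro c g hg
        simp only [Set.mem_setOf_eq, ContinuousMap.smul_apply, smul_eq_mul] at *
        rw [integral_const_mul, integral_const_mul, hg] }
  have hDclosed : IsClosed (D : Set C(Fin d → AddCircle L, ℂ)) :=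
    isClosed_eq (continuous_integral_CM μ) (continuous_integral_CM ν)
  have hspan : (span ℂ (Set.range (ch L (d := d)))) ≤ D := by
    rw [span_le]
    rintro - ⟨k, rfl⟩
    exact hch k
  have : (⊤ : Submodule ℂ C(Fin d → AddCircle L, ℂ)) ≤ D := by
    rw [← span_ch_dense (L := L) (d := d)]
    exact Submodule.topologicalClosure_minimal _ hspan hDclosed
  exact this (Submodule.mem_top)

lemma inner_eq_sum (a x : EuclideanSpace ℝ (Fin d)) : ⟪a, x⟫ = ∑ i, a i * x i := by
  simp [PiLp.inner_apply, mul_comm]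

/-- frequency vector -/
noncomputable def freq (d : ℕ) (L : ℝ) (k : Fin d → ℤ) : EuclideanSpace ℝ (Fin d) :=
  WithLp.toLp 2 (fun i => 2 * π * k i / L)

lemma inner_freq (k : Fin d → ℤ) (x : EuclideanSpace ℝ (Fin d)) :
    ⟪freq d L k, x⟫ = ∑ i, (2 * π * k i / L) * x i := by
  rw [inner_eq_sum]
  rfl

lemma ch_Q (hL : 0 < L) (k : Fin d → ℤ) (x : EuclideanSpace ℝ (Fin d)) :
    ch L k (Q d L x)
      = Complex.exp (((∑ i, (2 * π * k i / L) * x i : ℝ) : ℂ) * Complex.I) := by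
  rw [show Q d L x = fun i => (x i : AddCircle L) from rfl, ch_apply]
  have hpt : ∀ i : Fin d, (fourier (k i) ((x i : ℝ) : AddCircle L) : ℂ)
      = Complex.exp (2 * π * Complex.I * k i * x i / L) := fun i => fourier_coe_apply
  rw [Finset.prod_congr rfl fun i _ => hpt i, ← Complex.exp_sum]
  congr 1
  push_cast
  rw [Finset.sum_mul]
  exact Finset.sum_congr rfl fun i _ => by ring

lemma coord_abs_le_norm (x : EuclideanSpace ℝ (Fin d)) (i : Fin d) : |x i| ≤ ‖x‖ := by
  have h1 : ⟪EuclideanSpace.single i (1 : ℝ), x⟫ = x i := by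
    rw [EuclideanSpace.inner_single_left]; simp
  calc |x i| = |⟪EuclideanSpace.single i (1 : ℝ), x⟫| := by rw [h1]
    _ ≤ ‖EuclideanSpace.single i (1 : ℝ)‖ * ‖x‖ := abs_real_inner_le_norm _ _
    _ = ‖x‖ := by rw [EuclideanSpace.norm_single]; simp

/-- integer translation vector -/
noncomputable def tr (d : ℕ) (L : ℝ) (v : Fin d → ℤ) : EuclideanSpace ℝ (Fin d) :=
  WithLp.toLp 2 (fun i => L * v i)

lemma tr_apply (v : Fin d → ℤ) (i : Fin d) : tr d L v i = L * v i := rfl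

lemma preimage_Q_image (hL : 0 < L) (K : Set (EuclideanSpace ℝ (Fin d))) :
    Q d L ⁻¹' (Q d L '' K)
      = ⋃ v : Fin d → ℤ, (fun y : EuclideanSpace ℝ (Fin d) => y + tr d L v) '' K := by
  ext x
  simp only [Set.mem_preimage, Set.mem_image, Set.mem_iUnion]
  constructor
  · rintro ⟨y, hy, hQ⟩
    have hco : ∀ i : Fin d, ∃ m : ℤ, m • L = x i - y i := by
      intro i
      have hxy : ((x i : ℝ) : AddCircle L) = ((y i : ℝ) : AddCircle L) := (congrFun hQ i).symm
      rw [QuotientAddGroup.eq_iff_sub_mem] at hxy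
      exact (AddSubgroup.mem_zmultiples_iff).mp hxy
    choose v hv using hco
    refine ⟨v, y, hy, ?_⟩
    ext i
    have hvi := hv i
    rw [zsmul_eq_mul] at hvi
    show y i + tr d L v i = x i
    rw [tr_apply, mul_comm]
    linarith
  · rintro ⟨v, y, hy, rfl⟩
    refine ⟨y, hy, ?_⟩
    funext i
    show ((y i : ℝ) : AddCircle L) = (((y + tr d L v) i : ℝ) : AddCircle L)
    rw [QuotientAddGroup.eq_iff_sub_mem]
    refine (AddSubgroup.mem_zmultiples_iff).mpr ⟨-(v i), ?_⟩
    show (-(v i) : ℤ) • L = y i - (y i + tr d L v i)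
    rw [zsmul_eq_mul, tr_apply]
    push_cast
    ring

lemma measure_compact_le (μ ν : Measure (EuclideanSpace ℝ (Fin d)))
    [IsProbabilityMeasure μ] [IsProbabilityMeasure ν]
    (hQeq : ∀ L : ℝ, 0 < L → Measure.map (Q d L) μ = Measure.map (Q d L) ν)
    {K : Set (EuclideanSpace ℝ (Fin d))} (hK : IsCompact K) : μ K ≤ ν K := by
  obtain ⟨R, hR0, hKR⟩ : ∃ R : ℝ, 0 < R ∧ K ⊆ Metric.closedBall 0 R := by
    obtain ⟨R, hKR⟩ := hK.isBounded.subset_closedBall 0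
    exact ⟨max R 1, lt_of_lt_of_le one_pos (le_max_right R 1),
      hKR.trans (Metric.closedBall_subset_closedBall (le_max_left R 1))⟩
  have key : ∀ n : ℕ, 4 * R ≤ (n : ℝ) →
      μ K ≤ ν K + ν (Metric.closedBall (0 : EuclideanSpace ℝ (Fin d)) ((n : ℝ) / 4))ᶜ := by
    intro n hn
    set L : ℝ := (n : ℝ) with hLdef
    have hL : 0 < L := lt_of_lt_of_le (by positivity) hn
    haveI : Fact (0 < L) := ⟨hL⟩
    set S := Q d L ⁻¹' (Q d L '' K) with hS
    have hQK : IsCompact (Q d L '' K) := hK.image (Q d L).continuous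
    have hQKm : MeasurableSet (Q d L '' K) := hQK.isClosed.measurableSet
    have hSμν : μ S = ν S := by
      have e1 : Measure.map (Q d L) μ (Q d L '' K) = μ S :=
        Measure.map_apply (Q d L).continuous.measurable hQKm
      have e2 : Measure.map (Q d L) ν (Q d L '' K) = ν S :=
        Measure.map_apply (Q d L).continuous.measurable hQKm
      rw [← e1, ← e2, hQeq L hL]
    have hKS : K ⊆ S := Set.subset_preimage_image _ _
    have hSsub : S ⊆ K ∪ (Metric.closedBall (0 : EuclideanSpace ℝ (Fin d)) (L / 4))ᶜ := by
      rw [hS, preimage_Q_image hL]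
      rintro x hx
      simp only [Set.mem_iUnion, Set.mem_image] at hx
      obtain ⟨v, y, hy, rfl⟩ := hx
      by_cases hv : v = 0
      · left
        have htr0 : tr d L v = 0 := by ext i; rw [tr_apply, hv]; simp
        rw [htr0, add_zero]
        exact hy
      · right
        obtain ⟨i, hi⟩ : ∃ i, v i ≠ 0 := by
          by_contra hc
          push_neg at hc
          exact hv (funext hc)
        have hyR : ‖y‖ ≤ R := mem_closedBall_zero_iff.mp (hKR hy)
        have hvi : (1 : ℝ) ≤ |(v i : ℝ)| := by
          rw [← Int.cast_abs]
          exact_mod_cast Int.one_le_abs hi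
        have h2 : |y i| ≤ L / 4 := by
          have := coord_abs_le_norm y i
          linarith
        have h1 : L ≤ |L * (v i : ℝ)| := by
          rw [abs_mul, abs_of_pos hL]
          nlinarith
        have h3 := abs_sub_abs_le_abs_sub (L * (v i : ℝ)) (y i + L * (v i : ℝ))
        rw [show L * (v i : ℝ) - (y i + L * (v i : ℝ)) = -(y i) by ring, abs_neg] at h3
        have hcoord : L - L / 2 ≤ |y i + L * (v i : ℝ)| := by linarith
        have happ : (y + tr d L v) i = y i + L * (v i : ℝ) := rfl
        have hnorm : L - L / 2 ≤ ‖y + tr d L v‖ := by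
          refine le_trans hcoord ?_
          rw [← happ]
          exact coord_abs_le_norm _ i
        simp only [Set.mem_compl_iff, mem_closedBall_zero_iff, not_le]
        linarith
    calc μ K ≤ μ S := measure_mono hKS
      _ = ν S := hSμν
      _ ≤ ν (K ∪ (Metric.closedBall (0 : EuclideanSpace ℝ (Fin d)) (L / 4))ᶜ) :=
          measure_mono hSsub
      _ ≤ ν K + ν (Metric.closedBall (0 : EuclideanSpace ℝ (Fin d)) ((n : ℝ) / 4))ᶜ :=
          measure_union_le _ _
  have htend : Filter.Tendsto
      (fun n : ℕ => ν (Metric.closedBall (0 : EuclideanSpace ℝ (Fin d)) ((n : ℝ) / 4))ᶜ)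
      Filter.atTop (nhds 0) := by
    have hiInter : ⋂ n : ℕ, (Metric.closedBall (0 : EuclideanSpace ℝ (Fin d)) ((n : ℝ) / 4))ᶜ
        = ∅ := by
      ext x
      simp only [Set.mem_iInter, Set.mem_compl_iff, Metric.mem_closedBall,
        Set.mem_empty_iff_false, iff_false, not_forall, not_not]
      obtain ⟨n, hn⟩ := exists_nat_ge (4 * dist x 0)
      exact ⟨n, by linarith⟩
    have hmeas : ∀ n : ℕ,
        NullMeasurableSet (Metric.closedBall (0 : EuclideanSpace ℝ (Fin d)) ((n : ℝ) / 4))ᶜ ν :=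
      fun n => (Metric.isClosed_closedBall.measurableSet.compl).nullMeasurableSet
    have hanti : Antitone
        fun n : ℕ => (Metric.closedBall (0 : EuclideanSpace ℝ (Fin d)) ((n : ℝ) / 4))ᶜ := by
      intro m n hmn
      refine Set.compl_subset_compl.mpr (Metric.closedBall_subset_closedBall ?_)
      have : (m : ℝ) ≤ n := by exact_mod_cast hmn
      linarith
    have hfin : ν (Metric.closedBall (0 : EuclideanSpace ℝ (Fin d)) (((0 : ℕ) : ℝ) / 4))ᶜ ≠ ⊤ :=
      measure_ne_top ν _
    have hlim := tendsto_measure_iInter_atTop (μ := ν) hmeas hanti ⟨0, hfin⟩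
    rw [hiInter] at hlim
    simpa [Function.comp_def] using hlim
  have hconst : Filter.Tendsto
      (fun n : ℕ => ν K + ν (Metric.closedBall (0 : EuclideanSpace ℝ (Fin d)) ((n : ℝ) / 4))ᶜ)
      Filter.atTop (nhds (ν K + 0)) := Filter.Tendsto.add tendsto_const_nhds htend
  rw [add_zero] at hconst
  refine ge_of_tendsto hconst ?_
  obtain ⟨N, hN⟩ := exists_nat_ge (4 * R)
  filter_upwards [Filter.eventually_ge_atTop N] with n hn
  exact key n (le_trans hN (by exact_mod_cast hn))

end CramerWold

open CramerWold

/-- Cramér–Wold: two Borel probability measures on `ℝ^d` (`d ≥ 1`) with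
the same one-dimensional projections `x ↦ ⟨a, x⟩` for every `a ∈ ℝ^d` are equal. -/
theorem stmt14 (d : ℕ) (hd : 1 ≤ d)
    (μ ν : Measure (EuclideanSpace ℝ (Fin d)))
    [IsProbabilityMeasure μ] [IsProbabilityMeasure ν]
    (h : ∀ a : EuclideanSpace ℝ (Fin d),
      Measure.map (fun x => ⟪a, x⟫) μ = Measure.map (fun x => ⟪a, x⟫) ν) :
    μ = ν := by
  classical
  -- characteristic functions agree
  have charEq : ∀ a : EuclideanSpace ℝ (Fin d),
      ∫ x, Complex.exp ((⟪a, x⟫ : ℂ) * Complex.I) ∂μ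
        = ∫ x, Complex.exp ((⟪a, x⟫ : ℂ) * Complex.I) ∂ν := by
    intro a
    have hm : Measurable fun x : EuclideanSpace ℝ (Fin d) => ⟪a, x⟫ :=
      (continuous_const.inner continuous_id).measurable
    have hexp : Continuous fun t : ℝ => Complex.exp ((t : ℂ) * Complex.I) :=
      Complex.continuous_exp.comp (Complex.continuous_ofReal.mul continuous_const)
    calc ∫ x, Complex.exp ((⟪a, x⟫ : ℂ) * Complex.I) ∂μ
        = ∫ t, Complex.exp ((t : ℂ) * Complex.I) ∂(Measure.map (fun x => ⟪a, x⟫) μ) :=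
          (integral_map hm.aemeasurable hexp.aestronglyMeasurable).symm
      _ = ∫ t, Complex.exp ((t : ℂ) * Complex.I) ∂(Measure.map (fun x => ⟪a, x⟫) ν) := by
          rw [h a]
      _ = _ := integral_map hm.aemeasurable hexp.aestronglyMeasurable
  -- torus pushforwards agree
  have torusEq : ∀ L : ℝ, 0 < L → Measure.map (Q d L) μ = Measure.map (Q d L) ν := by
    intro L hL
    haveI : Fact (0 < L) := ⟨hL⟩
    have hQm : Measurable (Q d L) := (Q d L).continuous.measurable
    haveI : IsProbabilityMeasure (Measure.map (Q d L) μ) :=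
      Measure.isProbabilityMeasure_map hQm.aemeasurable
    haveI : IsProbabilityMeasure (Measure.map (Q d L) ν) :=
      Measure.isProbabilityMeasure_map hQm.aemeasurable
    have hch : ∀ k : Fin d → ℤ,
        ∫ t, ch L k t ∂(Measure.map (Q d L) μ) = ∫ t, ch L k t ∂(Measure.map (Q d L) ν) := by
      intro k
      rw [integral_map hQm.aemeasurable (ch L k).continuous.aestronglyMeasurable,
        integral_map hQm.aemeasurable (ch L k).continuous.aestronglyMeasurable]
      have hpt : (fun x : EuclideanSpace ℝ (Fin d) => ch L k (Q d L x))
          = fun x => Complex.exp ((⟪freq d L k, x⟫ : ℂ) * Complex.I) := by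
        funext x
        rw [ch_Q hL, inner_freq]
      rw [hpt]
      exact charEq _
    apply ext_of_forall_lintegral_eq_of_IsFiniteMeasure
    intro f
    have hint := integral_CM_eq_of_char (Measure.map (Q d L) μ) (Measure.map (Q d L) ν) hch
      ⟨fun t => ((f t : ℝ) : ℂ),
        Complex.continuous_ofReal.comp (NNReal.continuous_coe.comp f.continuous)⟩
    simp only [ContinuousMap.coe_mk] at hint
    have h1 : ∀ κ : Measure (Fin d → AddCircle L),
        ∫ t, ((f t : ℝ) : ℂ) ∂κ = ((∫ t, (f t : ℝ) ∂κ : ℝ) : ℂ) := fun κ => integral_ofReal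
    rw [h1, h1] at hint
    have hre : ∫ t, (f t : ℝ) ∂(Measure.map (Q d L) μ)
        = ∫ t, (f t : ℝ) ∂(Measure.map (Q d L) ν) := Complex.ofReal_inj.mp hint
    refine (ENNReal.toReal_eq_toReal_iff'
      (BoundedContinuousFunction.lintegral_lt_top_of_nnreal _ f).ne
      (BoundedContinuousFunction.lintegral_lt_top_of_nnreal _ f).ne).mp ?_
    rw [BoundedContinuousFunction.toReal_lintegral_coe_eq_integral,
      BoundedContinuousFunction.toReal_lintegral_coe_eq_integral]
    exact hre
  -- measures agree on compact sets
  have hcomp : ∀ K : Set (EuclideanSpace ℝ (Fin d)), IsCompact K → μ K = ν K := fun K hK =>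
    le_antisymm (measure_compact_le μ ν torusEq hK)
      (measure_compact_le ν μ (fun L hL => (torusEq L hL).symm) hK)
  -- conclude by inner regularity
  ext s hs
  rw [hs.measure_eq_iSup_isCompact_of_ne_top (measure_ne_top μ s),
    hs.measure_eq_iSup_isCompact_of_ne_top (measure_ne_top ν s)]
  refine iSup_congr fun K => iSup_congr fun hKs => iSup_congr fun hKc => hcomp K hKc
end

section
/- Let μ and ν be Borel probability measures on ℝ and let w : ℝ → ℝ be a measurable function with w(t) > 0 for Lebesgue-almost every t. If ∫_ℝ |φ_μ(t) − φ_ν(t)|² · w(t) dt = 0, then μ = ν. -/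
open MeasureTheory

/-- The characteristic function `φ_μ(t) = ∫ exp(i t x) dμ(x)` of a Borel (probability)
measure `μ` on `ℝ`. -/
noncomputable def charFn (μ : Measure ℝ) (t : ℝ) : ℂ :=
  ∫ x, Complex.exp (Complex.I * t * x) ∂μ

open Complex Real Filter Topology

lemma norm_cexp_Imul (t x : ℝ) : ‖Complex.exp (Complex.I * t * x)‖ = 1 := by
  rw [Complex.norm_exp]; simp

lemma charFn_cont (μ : Measure ℝ) [IsProbabilityMeasure μ] : Continuous (charFn μ) := by
  apply continuous_of_dominated (bound := fun _ => (1:ℝ))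
  · intro t
    exact (Complex.continuous_exp.comp (by continuity)).aestronglyMeasurable
  · intro t
    filter_upwards with x using le_of_eq (norm_cexp_Imul t x)
  · exact integrable_const 1
  · filter_upwards with x
    exact Complex.continuous_exp.comp (by continuity)

lemma ae_charFn_eq (μ ν : Measure ℝ) [IsProbabilityMeasure μ] [IsProbabilityMeasure ν]
    (w : ℝ → ℝ) (hwm : Measurable w) (hw : ∀ᵐ t ∂(volume : Measure ℝ), 0 < w t)
    (h : ∫⁻ t, ENNReal.ofReal (‖charFn μ t - charFn ν t‖ ^ 2 * w t) = 0) :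
    ∀ᵐ t ∂(volume : Measure ℝ), charFn μ t = charFn ν t := by
  have hm : AEMeasurable (fun t => ENNReal.ofReal (‖charFn μ t - charFn ν t‖ ^ 2 * w t)) := by
    have hc : Continuous fun t => ‖charFn μ t - charFn ν t‖ ^ 2 :=
      (continuous_norm.comp ((charFn_cont μ).sub (charFn_cont ν))).pow 2
    exact (ENNReal.measurable_ofReal.comp (hc.measurable.mul hwm)).aemeasurable
  have h0 := (lintegral_eq_zero_iff' hm).mp h
  filter_upwards [h0, hw] with t ht hwt
  have : ‖charFn μ t - charFn ν t‖ ^ 2 * w t ≤ 0 := by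
    exact ENNReal.ofReal_eq_zero.mp ht
  have h2 : ‖charFn μ t - charFn ν t‖ ^ 2 ≤ 0 := by
    nlinarith [sq_nonneg (‖charFn μ t - charFn ν t‖)]
  have h3 : ‖charFn μ t - charFn ν t‖ = 0 := by
    nlinarith [norm_nonneg (charFn μ t - charFn ν t)]
  rwa [norm_eq_zero, sub_eq_zero] at h3

lemma smooth_rep (μ : Measure ℝ) [IsProbabilityMeasure μ] (σ : ℝ) (hσ : 0 < σ) (y : ℝ) :
    ((2*π/σ^2 : ℝ) : ℂ)^(1/2 : ℂ) * ∫ x, ((rexp (-(y-x)^2/(2*σ^2)) : ℝ) : ℂ) ∂μ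
      = ∫ t : ℝ, Complex.exp (Complex.I*t*y - (σ^2/2)*t^2) * charFn μ (-t) := by
  have hb : (-(σ^2/2 : ℂ)).re < 0 := by
    rw [show (-(σ^2/2:ℂ)) = ((-(σ^2/2) : ℝ) : ℂ) by push_cast; ring, Complex.ofReal_re]
    nlinarith
  have hG : ∀ t x : ℝ, Complex.exp (Complex.I*t*y - (σ^2/2)*t^2) * Complex.exp (Complex.I*(-t)*x)
      = Complex.exp ((-(σ^2/2 : ℂ)) * t^2 + (Complex.I*(y - x)) * t + 0) := by
    intro t x
    rw [← Complex.exp_add]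
    congr 1
    ring
  have hnorm : ∀ t x : ℝ,
      ‖Complex.exp ((-(σ^2/2 : ℂ)) * t^2 + (Complex.I*(y - x)) * t + 0)‖ = rexp (-(σ^2/2) * t^2) := by
    intro t x
    rw [Complex.norm_exp]
    congr 1
    rw [show ((-(σ^2/2 : ℂ)) * t^2 : ℂ) = ((-(σ^2/2) * t^2 : ℝ) : ℂ) by push_cast; ring]
    simp [Complex.add_re, Complex.mul_re, Complex.ofReal_re, Complex.ofReal_im, Complex.I_re,
      ← Complex.ofReal_pow]
  -- integrability on product
  have hmeas : AEStronglyMeasurable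
      (Function.uncurry fun (t x : ℝ) => Complex.exp ((-(σ^2/2 : ℂ)) * t^2 + (Complex.I*(y - x)) * t + 0))
      ((volume : Measure ℝ).prod μ) := by
    apply Continuous.aestronglyMeasurable
    apply Complex.continuous_exp.comp
    apply Continuous.add
    apply Continuous.add
    · exact continuous_const.mul ((Complex.continuous_ofReal.comp continuous_fst).pow 2)
    · exact (continuous_const.mul ((continuous_const.sub (Complex.continuous_ofReal.comp continuous_snd)))).mul
        (Complex.continuous_ofReal.comp continuous_fst)
    · exact continuous_const
  have hint : Integrable
      (Function.uncurry fun (t x : ℝ) => Complex.exp ((-(σ^2/2 : ℂ)) * t^2 + (Complex.I*(y - x)) * t + 0))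
      ((volume : Measure ℝ).prod μ) := by
    rw [integrable_prod_iff hmeas]
    constructor
    · filter_upwards with t
      apply Integrable.mono' (integrable_const (rexp (-(σ^2/2) * t^2)))
      · exact (Continuous.aestronglyMeasurable (by continuity))
      · filter_upwards with x using le_of_eq (hnorm t x)
    · simp_rw [Function.uncurry, hnorm]
      simp only [integral_const, measure_univ, ENNReal.toReal_one, probReal_univ, smul_eq_mul, one_mul]
      exact integrable_exp_neg_mul_sq (by positivity)
  calc ((2*π/σ^2 : ℝ) : ℂ)^(1/2 : ℂ) * ∫ x, ((rexp (-(y-x)^2/(2*σ^2)) : ℝ) : ℂ) ∂μ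
      = ∫ x, ((2*π/σ^2 : ℝ) : ℂ)^(1/2 : ℂ) * ((rexp (-(y-x)^2/(2*σ^2)) : ℝ) : ℂ) ∂μ := by
        rw [integral_const_mul]
    _ = ∫ x, (∫ t : ℝ, Complex.exp ((-(σ^2/2 : ℂ)) * t^2 + (Complex.I*(y - x)) * t + 0)) ∂μ := by
        apply integral_congr_ae
        filter_upwards with x
        rw [integral_cexp_quadratic hb]
        have hI : (Complex.I*((y:ℂ) - x))^2 = -((y:ℂ) - x)^2 := by
          rw [mul_pow, Complex.I_sq]; ring
        congr 1
        · congr 1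
          push_cast
          field_simp
        · rw [show (0 : ℂ) - (Complex.I*((y:ℂ) - x))^2 / (4 * (-(σ^2/2 : ℂ))) = ((-(y-x)^2/(2*σ^2) : ℝ) : ℂ) by
            rw [hI]; push_cast; field_simp; ring]
          exact Complex.ofReal_exp _
    _ = ∫ t : ℝ, (∫ x, Complex.exp ((-(σ^2/2 : ℂ)) * t^2 + (Complex.I*(y - x)) * t + 0) ∂μ) := by
        exact (integral_integral_swap hint).symm
    _ = ∫ t : ℝ, Complex.exp (Complex.I*t*y - (σ^2/2)*t^2) * charFn μ (-t) := by
        apply integral_congr_ae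
        filter_upwards with t
        rw [charFn, ← integral_const_mul]
        apply integral_congr_ae
        filter_upwards with x
        push_cast
        exact (hG t x).symm

lemma gauss_int (σ : ℝ) (hσ : 0 < σ) : Integrable (fun u : ℝ => rexp (-u^2/(2*σ^2))) := by
  apply (integrable_exp_neg_mul_sq (b := (2*σ^2)⁻¹) (by positivity)).congr
  filter_upwards with u
  congr 1
  field_simp

lemma stepA (μ : Measure ℝ) [IsProbabilityMeasure μ] (σ : ℝ) (hσ : 0 < σ) (f : BoundedContinuousFunction ℝ ℝ) :
    ∫ x, (∫ y, f y * rexp (-(y-x)^2/(2*σ^2))) ∂μ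
      = ∫ y, f y * (∫ x, rexp (-(y-x)^2/(2*σ^2)) ∂μ) := by
  have hcont : Continuous (Function.uncurry fun (x y : ℝ) => f y * rexp (-(y-x)^2/(2*σ^2))) := by
    apply Continuous.mul
    · exact f.continuous.comp continuous_snd
    · exact Real.continuous_exp.comp (by continuity)
  have hmeas := hcont.aestronglyMeasurable (μ := μ.prod volume)
  have hint : Integrable (Function.uncurry fun (x y : ℝ) => f y * rexp (-(y-x)^2/(2*σ^2)))
      (μ.prod volume) := by
    rw [integrable_prod_iff hmeas]
    constructor
    · filter_upwards with x
      exact ((gauss_int σ hσ).comp_sub_right x).bdd_mul f.continuous.aestronglyMeasurable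
        (ae_of_all _ fun y => f.norm_coe_le_norm y)
    · apply Integrable.mono' (integrable_const (‖f‖ * ∫ u : ℝ, rexp (-u^2/(2*σ^2))))
      · exact (hcont.norm.aestronglyMeasurable (μ := μ.prod volume)).integral_prod_right'
      · filter_upwards with x
        simp only [Function.uncurry]
        rw [Real.norm_eq_abs, _root_.abs_of_nonneg (integral_nonneg (fun y => norm_nonneg _))]
        calc ∫ y, ‖f y * rexp (-(y-x)^2/(2*σ^2))‖
            ≤ ∫ y, ‖f‖ * rexp (-(y-x)^2/(2*σ^2)) := by
              apply integral_mono_of_nonneg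
              · filter_upwards with y using norm_nonneg _
              · exact ((gauss_int σ hσ).comp_sub_right x).const_mul _
              · filter_upwards with y
                rw [norm_mul, Real.norm_eq_abs (rexp _), _root_.abs_of_nonneg (Real.exp_nonneg _)]
                exact mul_le_mul_of_nonneg_right (f.norm_coe_le_norm y) (Real.exp_nonneg _)
          _ = ‖f‖ * ∫ y, rexp (-(y-x)^2/(2*σ^2)) := by rw [integral_const_mul]
          _ = ‖f‖ * ∫ u : ℝ, rexp (-u^2/(2*σ^2)) := by
              rw [integral_sub_right_eq_self (fun u => rexp (-u^2/(2*σ^2))) x]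
  rw [integral_integral_swap hint]
  apply integral_congr_ae
  filter_upwards with y
  rw [integral_const_mul]

lemma subst_lemma (σ : ℝ) (hσ : 0 < σ) (f : BoundedContinuousFunction ℝ ℝ) (x : ℝ) :
    ∫ y, f y * rexp (-(y-x)^2/(2*σ^2))
      = σ * ∫ z, f (x + σ*z) * rexp (-z^2/2) := by
  rw [← MeasureTheory.integral_add_left_eq_self (fun y => f y * rexp (-(y-x)^2/(2*σ^2))) x]
  have h0 : ∀ z : ℝ, f (x + z) * rexp (-(x + z - x)^2/(2*σ^2))
      = f (x + z) * rexp (-z^2/(2*σ^2)) := by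
    intro z; congr 2; ring_nf
  simp only [h0]
  have h1 := MeasureTheory.Measure.integral_comp_mul_left
    (fun z => f (x + z) * rexp (-z^2/(2*σ^2))) σ
  have h2 : ∀ z : ℝ, f (x + σ*z) * rexp (-(σ*z)^2/(2*σ^2)) = f (x + σ*z) * rexp (-z^2/2) := by
    intro z; congr 2; field_simp
  simp only [h2] at h1
  rw [h1, _root_.abs_of_pos (by positivity : (0:ℝ) < σ⁻¹), smul_eq_mul, ← mul_assoc,
    mul_inv_cancel₀ hσ.ne', one_mul]

lemma gauss_int1 : Integrable (fun z : ℝ => rexp (-z^2/2)) := by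
  have := gauss_int 1 one_pos
  simpa using this

lemma c0_pos : 0 < ∫ z : ℝ, rexp (-z^2/2) := by
  have h : (∫ z : ℝ, rexp (-z^2/2)) = Real.sqrt (π / (1/2)) := by
    rw [← integral_gaussian (1/2)]
    apply integral_congr_ae
    filter_upwards with z
    congr 1
    ring
  rw [h]
  exact Real.sqrt_pos.mpr (by positivity)

lemma Hcont (σ : ℝ) (f : BoundedContinuousFunction ℝ ℝ) :
    Continuous fun x => ∫ z, f (x + σ*z) * rexp (-z^2/2) := by
  apply continuous_of_dominated (bound := fun z => ‖f‖ * rexp (-z^2/2))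
  · intro x
    exact (Continuous.aestronglyMeasurable (by continuity))
  · intro x
    filter_upwards with z
    rw [norm_mul, Real.norm_eq_abs (rexp _), _root_.abs_of_nonneg (Real.exp_nonneg _)]
    exact mul_le_mul_of_nonneg_right (f.norm_coe_le_norm _) (Real.exp_nonneg _)
  · exact gauss_int1.const_mul _
  · filter_upwards with z
    exact ((f.continuous.comp (by continuity)).mul continuous_const)

lemma Hbound (σ : ℝ) (f : BoundedContinuousFunction ℝ ℝ) (x : ℝ) :
    ‖∫ z, f (x + σ*z) * rexp (-z^2/2)‖ ≤ ‖f‖ * ∫ z : ℝ, rexp (-z^2/2) := by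
  calc ‖∫ z, f (x + σ*z) * rexp (-z^2/2)‖ ≤ ∫ z, ‖f (x + σ*z) * rexp (-z^2/2)‖ :=
        norm_integral_le_integral_norm _
    _ ≤ ∫ z, ‖f‖ * rexp (-z^2/2) := by
        apply integral_mono_of_nonneg
        · filter_upwards with z using norm_nonneg _
        · exact gauss_int1.const_mul _
        · filter_upwards with z
          rw [norm_mul, Real.norm_eq_abs (rexp _), _root_.abs_of_nonneg (Real.exp_nonneg _)]
          exact mul_le_mul_of_nonneg_right (f.norm_coe_le_norm _) (Real.exp_nonneg _)
    _ = ‖f‖ * ∫ z : ℝ, rexp (-z^2/2) := integral_const_mul _ _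

lemma lim2 (μ : Measure ℝ) [IsProbabilityMeasure μ] (f : BoundedContinuousFunction ℝ ℝ)
    (σ : ℕ → ℝ) (hσ0 : Filter.Tendsto σ atTop (𝓝 0)) :
    Filter.Tendsto (fun n => ∫ x, (∫ z, f (x + σ n * z) * rexp (-z^2/2)) ∂μ) atTop
      (𝓝 (∫ x, (∫ z : ℝ, rexp (-z^2/2)) * f x ∂μ)) := by
  apply tendsto_integral_of_dominated_convergence
    (bound := fun _ => ‖f‖ * ∫ z : ℝ, rexp (-z^2/2))
  · intro n
    exact (Hcont (σ n) f).aestronglyMeasurable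
  · exact integrable_const _
  · intro n
    filter_upwards with x using Hbound (σ n) f x
  · filter_upwards with x
    -- pointwise: inner integral tends to (∫ e) * f x
    have : Filter.Tendsto (fun n => ∫ z, f (x + σ n * z) * rexp (-z^2/2)) atTop
        (𝓝 (∫ z : ℝ, f x * rexp (-z^2/2))) := by
      apply tendsto_integral_of_dominated_convergence (bound := fun z => ‖f‖ * rexp (-z^2/2))
      · intro n
        exact (Continuous.aestronglyMeasurable (by continuity))
      · exact gauss_int1.const_mul _
      · intro n
        filter_upwards with z
        rw [norm_mul, Real.norm_eq_abs (rexp _), _root_.abs_of_nonneg (Real.exp_nonneg _)]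
        exact mul_le_mul_of_nonneg_right (f.norm_coe_le_norm _) (Real.exp_nonneg _)
      · filter_upwards with z
        have hx : Filter.Tendsto (fun n => x + σ n * z) atTop (𝓝 x) := by
          have := (hσ0.mul_const z).const_add x
          simpa using this
        exact ((f.continuous.tendsto x).comp hx).mul_const _
    rwa [MeasureTheory.integral_const_mul, mul_comm] at this

theorem key (μ ν : Measure ℝ) [IsProbabilityMeasure μ] [IsProbabilityMeasure ν]
    (hc : ∀ᵐ t ∂(volume : Measure ℝ), charFn μ t = charFn ν t) : μ = ν := by
  have main : ∀ f : BoundedContinuousFunction ℝ ℝ, ∫ x, f x ∂μ = ∫ x, f x ∂ν := by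
    intro f
    set σ : ℕ → ℝ := fun n => ((n : ℝ)+1)⁻¹ with hσdef
    have hσpos : ∀ n, 0 < σ n := fun n => by positivity
    have hσ0 : Filter.Tendsto σ atTop (𝓝 0) := by
      simpa [hσdef, one_div] using tendsto_one_div_add_atTop_nhds_zero_nat (𝕜 := ℝ)
    have hcneg : ∀ᵐ t ∂(volume : Measure ℝ), charFn μ (-t) = charFn ν (-t) := by
      have h := hc
      rw [← Measure.map_neg_eq_self (volume : Measure ℝ)] at h
      exact MeasureTheory.ae_of_ae_map (measurable_neg.aemeasurable) h
    have hp : ∀ n y, (∫ x, rexp (-(y-x)^2/(2*(σ n)^2)) ∂μ)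
        = ∫ x, rexp (-(y-x)^2/(2*(σ n)^2)) ∂ν := by
      intro n y
      have h1 := smooth_rep μ (σ n) (hσpos n) y
      have h2 := smooth_rep ν (σ n) (hσpos n) y
      have h3 : (∫ t : ℝ, Complex.exp (Complex.I*t*y - ((σ n)^2/2)*t^2) * charFn μ (-t))
          = ∫ t : ℝ, Complex.exp (Complex.I*t*y - ((σ n)^2/2)*t^2) * charFn ν (-t) := by
        apply integral_congr_ae
        filter_upwards [hcneg] with t ht
        rw [ht]
      rw [h3, ← h2] at h1
      have hCne : ((2*π/(σ n)^2 : ℝ) : ℂ)^(1/2 : ℂ) ≠ 0 := by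
        rw [Ne, Complex.cpow_eq_zero_iff]
        push_neg
        intro hz
        exfalso
        have : (2*π/(σ n)^2 : ℝ) ≠ 0 := by positivity
        exact this (by exact_mod_cast hz)
      have h4 := mul_left_cancel₀ hCne h1
      have e1 : ∫ x, ((rexp (-(y-x)^2/(2*(σ n)^2)) : ℝ) : ℂ) ∂μ
          = ((∫ x, rexp (-(y-x)^2/(2*(σ n)^2)) ∂μ : ℝ) : ℂ) := integral_ofReal (𝕜 := ℂ)
      have e2 : ∫ x, ((rexp (-(y-x)^2/(2*(σ n)^2)) : ℝ) : ℂ) ∂ν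
          = ((∫ x, rexp (-(y-x)^2/(2*(σ n)^2)) ∂ν : ℝ) : ℂ) := integral_ofReal (𝕜 := ℂ)
      rw [e1, e2] at h4
      exact_mod_cast h4
    have heq : ∀ n, ∫ x, (∫ z, f (x + σ n * z) * rexp (-z^2/2)) ∂μ
        = ∫ x, (∫ z, f (x + σ n * z) * rexp (-z^2/2)) ∂ν := by
      intro n
      have h1 := stepA μ (σ n) (hσpos n) f
      have h2 := stepA ν (σ n) (hσpos n) f
      simp_rw [subst_lemma (σ n) (hσpos n) f] at h1 h2
      have h3 : (∫ y, f y * (∫ x, rexp (-(y-x)^2/(2*(σ n)^2)) ∂μ))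
          = ∫ y, f y * (∫ x, rexp (-(y-x)^2/(2*(σ n)^2)) ∂ν) := by
        apply integral_congr_ae
        filter_upwards with y
        rw [hp n y]
      rw [MeasureTheory.integral_const_mul] at h1 h2
      have h5 : σ n * ∫ x, (∫ z, f (x + σ n * z) * rexp (-z^2/2)) ∂μ
          = σ n * ∫ x, (∫ z, f (x + σ n * z) * rexp (-z^2/2)) ∂ν := by
        rw [h1, h2, h3]
      exact mul_left_cancel₀ (hσpos n).ne' h5
    have t1 := lim2 μ f σ hσ0
    have t2 := lim2 ν f σ hσ0
    simp_rw [heq] at t1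
    have h6 := tendsto_nhds_unique t1 t2
    rw [MeasureTheory.integral_const_mul, MeasureTheory.integral_const_mul] at h6
    exact mul_left_cancel₀ c0_pos.ne' h6
  apply ext_of_forall_lintegral_eq_of_IsFiniteMeasure
  intro f
  have hL : LipschitzWith 1 ((↑) : NNReal → ℝ) := by
    apply LipschitzWith.of_dist_le_mul
    intro x y
    rw [Real.dist_eq, NNReal.coe_one, one_mul, NNReal.dist_eq]
  have hmain := main (BoundedContinuousFunction.comp _ hL f)
  have fin1 : ∫⁻ x, f x ∂μ ≠ ⊤ := (f.lintegral_lt_top_of_nnreal μ).ne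
  have fin2 : ∫⁻ x, f x ∂ν ≠ ⊤ := (f.lintegral_lt_top_of_nnreal ν).ne
  rw [← ENNReal.toReal_eq_toReal_iff' fin1 fin2,
    BoundedContinuousFunction.toReal_lintegral_coe_eq_integral,
    BoundedContinuousFunction.toReal_lintegral_coe_eq_integral]
  exact hmain

/-- if `μ, ν` are Borel probability measures on `ℝ`, `w : ℝ → ℝ` is
measurable with `w(t) > 0` for Lebesgue-a.e. `t`, and the weighted `L²` distance
`∫ |φ_μ(t) − φ_ν(t)|² w(t) dt` between their characteristic functions vanishes,
then `μ = ν`. -/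
theorem stmt16 (μ ν : Measure ℝ) [IsProbabilityMeasure μ] [IsProbabilityMeasure ν]
    (w : ℝ → ℝ) (hwm : Measurable w) (hw : ∀ᵐ t ∂(volume : Measure ℝ), 0 < w t)
    (h : ∫⁻ t, ENNReal.ofReal (‖charFn μ t - charFn ν t‖ ^ 2 * w t) = 0) :
    μ = ν := by
  exact key μ ν (ae_charFn_eq μ ν w hwm hw h)
end
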